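/- Let X ⊆ ℝⁿ be a closed convex set, Y := aff(C_∞X), and suppose T : ℝⁿ → ℝᵐ is a linear map such that the restriction T|_Y has rank m and ri(C_∞X) ∩ ker(T) ≠ ∅. Then T(C_∞X') = ℝᵐ where X' is any translate of X containing 0 in its relative interior; in particular T(X) = ℝᵐ is closed. -/
import Mathlib


open Metric Filter Set

/-- γ(x,R,X): sup of radii r ≥ 0 of open balls contained in B_R(x) \ X (sup ∅ = 0). -/
noncomputable def porGamma {E : Type*} [SeminormedAddCommGroup E] (x : E) (R : ℝ) (X : Set E) : ℝ :=
  sSup {r : ℝ | 0 ≤ r ∧ ∃ x' : E, ball x' r ⊆ ball x R \ X}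

/-- Porosity of X at x: liminf_{R→0⁺} γ(x,R,X)/R. -/
noncomputable def porosityAt {E : Type*} [SeminormedAddCommGroup E] (x : E) (X : Set E) : ℝ :=
  liminf (fun R => porGamma x R X / R) (nhdsWithin 0 (Ioi 0))

/-- X is porous if its porosity is positive at each of its points. -/
def IsPorous {E : Type*} [SeminormedAddCommGroup E] (X : Set E) : Prop :=
  ∀ x ∈ X, 0 < porosityAt x X

/-- X is σ-porous if it is a countable union of porous sets. -/
def IsSigmaPorous {E : Type*} [SeminormedAddCommGroup E] (X : Set E) : Prop :=
  ∃ f : ℕ → Set E, (∀ k, IsPorous (f k)) ∧ X = ⋃ k, f k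

/-- Asymptotic cone of X. -/
def asympCone {E : Type*} [SeminormedAddCommGroup E] [NormedSpace ℝ E] (X : Set E) : Set E :=
  {v | ∃ (x : ℕ → E) (t : ℕ → ℝ), (∀ k, x k ∈ X) ∧ (∀ k, 0 < t k) ∧
    Tendsto (fun k => ‖x k‖) atTop atTop ∧ Tendsto (fun k => t k • x k) atTop (nhds v)}

variable {E : Type*} [SeminormedAddCommGroup E] [NormedSpace ℝ E]

lemma tk_zero {x : ℕ → E} {t : ℕ → ℝ} {v : E} (ht : ∀ k, 0 < t k)
    (hx : Tendsto (fun k => ‖x k‖) atTop atTop)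
    (hv : Tendsto (fun k => t k • x k) atTop (nhds v)) :
    Tendsto t atTop (nhds 0) := by
  have h2 : Tendsto (fun k => ‖t k • x k‖ / ‖x k‖) atTop (nhds 0) := hv.norm.div_atTop hx
  have h3 : ∀ᶠ k in atTop, ‖t k • x k‖ / ‖x k‖ = t k := by
    filter_upwards [hx.eventually_ge_atTop 1] with k hk
    rw [norm_smul, Real.norm_eq_abs, abs_of_pos (ht k), mul_div_assoc, div_self (by linarith),
      mul_one]
  exact h2.congr' h3

lemma zero_mem_asympCone {X : Set E} {v : E} (hv : v ∈ asympCone X) : (0 : E) ∈ asympCone X := by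
  obtain ⟨x, t, hx, ht, hn, hl⟩ := hv
  refine ⟨x, fun k => t k * t k, hx, fun k => mul_pos (ht k) (ht k), hn, ?_⟩
  have := (tk_zero ht hn hl).smul hl
  simpa [smul_smul] using this

lemma smul_mem_asympCone {X : Set E} {v : E} {c : ℝ} (hc : 0 < c) (hv : v ∈ asympCone X) :
    c • v ∈ asympCone X := by
  obtain ⟨x, t, hx, ht, hn, hl⟩ := hv
  refine ⟨x, fun k => c * t k, hx, fun k => mul_pos hc (ht k), hn, ?_⟩
  have := hl.const_smul c
  simpa [smul_smul] using this

lemma mem_asympCone_translate {X : Set E} {v : E} (c : E) (hv : v ∈ asympCone X) :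
    v ∈ asympCone ((fun y => y + c) '' X) := by
  obtain ⟨x, t, hx, ht, hn, hl⟩ := hv
  refine ⟨fun k => x k + c, t, fun k => ⟨x k, hx k, rfl⟩, ht, ?_, ?_⟩
  · refine tendsto_atTop_mono (fun k => ?_) (tendsto_atTop_add_const_right _ (-‖c‖) hn)
    have h := norm_add_le (x k + c) (-c)
    simp only [add_neg_cancel_right, norm_neg] at h
    linarith
  · have h1 : Tendsto (fun k => t k • c) atTop (nhds ((0:ℝ) • c)) :=
      (tk_zero ht hn hl).smul_const c
    have := hl.add h1
    simpa [smul_add] using this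

lemma asympCone_sub_translate (X : Set E) (x₀ : E) :
    asympCone ((fun y => y - x₀) '' X) = asympCone X := by
  have himg : (fun y => y - x₀) '' X = (fun y => y + (-x₀)) '' X := by
    simp [sub_eq_add_neg]
  apply Set.Subset.antisymm
  · intro v hv
    have := mem_asympCone_translate (X := (fun y => y - x₀) '' X) x₀ hv
    have heq : (fun y => y + x₀) '' ((fun y => y - x₀) '' X) = X := by
      rw [Set.image_image]; simp
    rwa [heq] at this
  · intro v hv
    rw [himg]; exact mem_asympCone_translate _ hv

lemma add_recession_mem {X : Set E} (hX : IsClosed X) (hconv : Convex ℝ X) {x₀ v : E}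
    (hx₀ : x₀ ∈ X) (hv : v ∈ asympCone X) : x₀ + v ∈ X := by
  obtain ⟨x, t, hx, ht, hn, hl⟩ := hv
  have ht0 := tk_zero ht hn hl
  have hle : ∀ᶠ k in atTop, t k ≤ 1 := by
    have := ht0.eventually (eventually_le_nhds (by norm_num : (0:ℝ) < 1))
    exact this
  have hy : Tendsto (fun k => (1 - t k) • x₀ + t k • x k) atTop (nhds (x₀ + v)) := by
    have h1 : Tendsto (fun k => (1 - t k) • x₀) atTop (nhds ((1 - 0 : ℝ) • x₀)) :=
      ((tendsto_const_nhds.sub ht0).smul_const x₀)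
    have := h1.add hl
    simpa using this
  refine hX.mem_of_tendsto hy ?_
  filter_upwards [hle] with k hk
  exact hconv hx₀ (hx k) (by linarith) (le_of_lt (ht k)) (by ring)

lemma ri_move {C : Set E} {v u : E} (hv : v ∈ intrinsicInterior ℝ C)
    (hmem : ∀ ε : ℝ, v + ε • u ∈ affineSpan ℝ C) :
    ∃ ε : ℝ, 0 < ε ∧ v + ε • u ∈ C := by
  obtain ⟨v', hv', hcoe⟩ := hv
  set f : ℝ → affineSpan ℝ C := fun ε => ⟨v + ε • u, hmem ε⟩ with hf
  have hfc : Continuous f := by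
    apply Continuous.subtype_mk
    exact continuous_const.add (continuous_id.smul continuous_const)
  have hf0 : f 0 = v' := by
    apply Subtype.ext
    simp [hf, hcoe]
  have h0 : f 0 ∈ interior ((↑) ⁻¹' C : Set (affineSpan ℝ C)) := by rw [hf0]; exact hv'
  have hev : ∀ᶠ ε in nhds (0:ℝ), f ε ∈ interior ((↑) ⁻¹' C : Set (affineSpan ℝ C)) :=
    hfc.continuousAt.eventually_mem (isOpen_interior.mem_nhds h0)
  have h2 : ∀ᶠ ε in nhdsWithin (0:ℝ) (Set.Ioi 0),
      f ε ∈ interior ((↑) ⁻¹' C : Set (affineSpan ℝ C)) ∧ ε ∈ Set.Ioi 0 :=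
    (hev.filter_mono nhdsWithin_le_nhds).and eventually_mem_nhdsWithin
  obtain ⟨ε, hεm, hεpos⟩ := h2.exists
  have : f ε ∈ ((↑) ⁻¹' C : Set (affineSpan ℝ C)) := interior_subset hεm
  exact ⟨ε, hεpos, this⟩

/-- If X is closed convex, T|_{aff(C_∞X)} has rank m and ker T meets ri(C_∞X), then for any
translate X' of X with 0 ∈ ri(X') one has T(C_∞X') = ℝᵐ; in particular T(X) = ℝᵐ is closed. -/
theorem surjOnCone_of_ri_meets_ker {n m : ℕ} (X : Set (EuclideanSpace ℝ (Fin n)))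
    (hX : IsClosed X) (hconv : Convex ℝ X)
    (Y : Submodule ℝ (EuclideanSpace ℝ (Fin n)))
    (hY : (Y : Set (EuclideanSpace ℝ (Fin n))) = (affineSpan ℝ (asympCone X) : Set (EuclideanSpace ℝ (Fin n))))
    (T : EuclideanSpace ℝ (Fin n) →L[ℝ] EuclideanSpace ℝ (Fin m))
    (hrank : Module.finrank ℝ (Y.map (T : EuclideanSpace ℝ (Fin n) →ₗ[ℝ] EuclideanSpace ℝ (Fin m))) = m)
    (hri : (intrinsicInterior ℝ (asympCone X) ∩ (LinearMap.ker (T : EuclideanSpace ℝ (Fin n) →ₗ[ℝ] EuclideanSpace ℝ (Fin m)) : Set (EuclideanSpace ℝ (Fin n)))).Nonempty) :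
    (∀ x₀ : EuclideanSpace ℝ (Fin n),
        (0 : EuclideanSpace ℝ (Fin n)) ∈ intrinsicInterior ℝ ((fun y => y - x₀) '' X) →
        T '' asympCone ((fun y => y - x₀) '' X) = Set.univ) ∧
      T '' X = Set.univ ∧ IsClosed (T '' X) := by
  
  classical
  obtain ⟨v, hvri, hvker⟩ := hri
  have hvC : v ∈ asympCone X := intrinsicInterior_subset hvri
  have hTv : T v = 0 := hvker
  have htop : Y.map (T : EuclideanSpace ℝ (Fin n) →ₗ[ℝ] EuclideanSpace ℝ (Fin m)) = ⊤ :=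
    Submodule.eq_top_of_finrank_eq (by rw [hrank, finrank_euclideanSpace_fin])
  have hTC : T '' asympCone X = Set.univ := by
    apply Set.eq_univ_of_forall
    intro w
    have hw : w ∈ Y.map (T : EuclideanSpace ℝ (Fin n) →ₗ[ℝ] EuclideanSpace ℝ (Fin m)) := by
      rw [htop]; exact Submodule.mem_top
    obtain ⟨u, huY, hTu⟩ := hw
    have hvY : v ∈ Y := by
      rw [← SetLike.mem_coe, hY, SetLike.mem_coe]
      exact subset_affineSpan ℝ _ hvC
    have hmem : ∀ ε : ℝ, v + ε • u ∈ affineSpan ℝ (asympCone X) := by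
      intro ε
      have h1 : v + ε • u ∈ Y := Y.add_mem hvY (Y.smul_mem ε huY)
      rw [← SetLike.mem_coe] at h1 ⊢
      rwa [hY] at h1
    obtain ⟨ε, hε, hC⟩ := ri_move hvri hmem
    refine ⟨ε⁻¹ • (v + ε • u), smul_mem_asympCone (by positivity) hC, ?_⟩
    rw [map_smul, map_add, hTv, map_smul, zero_add, smul_smul,
      inv_mul_cancel₀ hε.ne', one_smul]
    exact hTu
  obtain ⟨xs, ts, hxs, -, -, -⟩ := hvC
  have hTX : T '' X = Set.univ := by
    apply Set.eq_univ_of_forall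
    intro w
    have hw : w - T (xs 0) ∈ T '' asympCone X := by rw [hTC]; exact Set.mem_univ _
    obtain ⟨c, hcC, hTc⟩ := hw
    refine ⟨xs 0 + c, add_recession_mem hX hconv (hxs 0) hcC, ?_⟩
    rw [map_add, hTc]; abel
  refine ⟨fun x₀ _ => ?_, hTX, by rw [hTX]; exact isClosed_univ⟩
  rw [asympCone_sub_translate]
  exact hTC
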